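/- In the independent model with parameters φ_i ∈ (0,1], let u_B be the block policy determined by an ordering v^1,…,v^m of the urns, with state counts x(t), and let τ(k) := ∑_{j=1}^{k−1} N_{v^j} be the first stage at which urn v^k is queried. Then for each k, Q(x(τ(k))) = ∏_{j=1}^{k−1} (1 − φ_{v^j}), and the total expected cost satisfies E[C](u_B) = ∑_{k=1}^{m} (N_{v^k} − (N_{v^k}+1)·φ_{v^k}/2) · ∏_{j=1}^{k−1} (1 − φ_{v^j}). -/

import Mathlib

open Finset

variable {V : Type*} [Fintype V] [DecidableEq V]

/-- `phi μ U` is the probability that every urn in `U` contains a red marble: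
the sum of `μ T` over all `T ⊇ U`. -/
noncomputable def phi (μ : Finset V → ℝ) (U : Finset V) : ℝ :=
  ∑ T ∈ univ.filter (fun T => U ⊆ T), μ T

/-- `Qfun N μ x` is the probability that no red marble appears among the first
`x i` randomly drawn marbles of each urn `i`. -/
noncomputable def Qfun (N : V → ℕ) (μ : Finset V → ℝ) (x : V → ℕ) : ℝ :=
  ∑ T : Finset V, μ T * ∏ i ∈ T, (1 - (x i : ℝ) / (N i : ℝ))

/-- `Rfun N μ U x` is the probability that no red marble has been drawn and every
urn in `U` contains a red marble. -/
noncomputable def Rfun (N : V → ℕ) (μ : Finset V → ℝ) (U : Finset V) (x : V → ℕ) : ℝ :=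
  ∑ T ∈ univ.filter (fun T => U ⊆ T), μ T * ∏ i ∈ T, (1 - (x i : ℝ) / (N i : ℝ))

/-- A valid policy: a finite sequence of urn queries in which urn `i` occurs
exactly `N i` times. -/
def validPolicy (N : V → ℕ) (L : List V) : Prop := ∀ i, L.count i = N i

/-- Expected cost (expected number of blue marbles drawn) of a policy `L`. -/
noncomputable def ECost (N : V → ℕ) (μ : Finset V → ℝ) (L : List V) : ℝ :=
  ∑ t ∈ Finset.range L.length, Qfun N μ (fun i => (L.take (t + 1)).count i)

/-- The block policy determined by an ordering `v` of the urns: query urn `v 0`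
for `N (v 0)` stages, then `v 1` for `N (v 1)` stages, and so on. -/
def blockPolicy (N : V → ℕ) (v : Fin (Fintype.card V) → V) : List V :=
  (List.ofFn v).flatMap (fun i => List.replicate (N i) i)

/-- The independent model with parameters `φ i`. -/
noncomputable def muInd (φ : V → ℝ) : Finset V → ℝ :=
  fun T => (∏ i ∈ T, φ i) * ∏ j ∈ Tᶜ, (1 - φ j)

set_option linter.unusedSectionVars false

lemma qfun_prod (N : V → ℕ) (φ : V → ℝ) (x : V → ℕ) :
    Qfun N (muInd φ) x = ∏ i, (1 - φ i * ((x i : ℝ) / (N i : ℝ))) := by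
  have h := Finset.prod_add (fun i => φ i * (1 - (x i : ℝ) / (N i : ℝ)))
    (fun i => 1 - φ i) (univ : Finset V)
  rw [Finset.powerset_univ] at h
  unfold Qfun muInd
  rw [show (∏ i : V, (1 - φ i * ((x i : ℝ) / (N i : ℝ)))) =
      ∏ i : V, ((fun i => φ i * (1 - (x i : ℝ) / (N i : ℝ))) i + (fun i => 1 - φ i) i) from
    Finset.prod_congr rfl (fun i _ => by ring), h]
  refine Finset.sum_congr rfl (fun T _ => ?_)
  rw [Finset.compl_eq_univ_sdiff]
  rw [Finset.prod_mul_distrib]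
  ring

lemma count_flatMap (N : V → ℕ) : ∀ (w : List V), w.Nodup → ∀ i : V,
    ((w.flatMap fun a => List.replicate (N a) a).count i) = if i ∈ w then N i else 0
  | [], _, i => by simp
  | a :: w, hw, i => by
    rw [List.flatMap_cons, List.count_append, List.count_replicate,
      count_flatMap N w (List.nodup_cons.1 hw).2 i]
    rcases eq_or_ne i a with rfl | hne
    · simp [(List.nodup_cons.1 hw).1]
    · simp [hne, Ne.symm hne]

lemma take_block (N : V → ℕ) (w1 w2 : List V) (a : V) (s : ℕ) (hs : s ≤ N a) :
    (((w1 ++ a :: w2).flatMap fun b => List.replicate (N b) b).take ((w1.map N).sum + s))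
      = (w1.flatMap fun b => List.replicate (N b) b) ++ List.replicate s a := by
  rw [List.flatMap_append, List.flatMap_cons]
  have hlen : (w1.flatMap fun b => List.replicate (N b) b).length = (w1.map N).sum := by
    rw [List.length_flatMap]
    congr 1
    simp [Function.comp]
  rw [← hlen, List.take_append,
    List.take_append_of_le_length (by simpa using hs), List.take_replicate,
    Nat.add_sub_cancel_left, min_eq_left hs, List.take_of_length_le (Nat.le_add_right _ _)]

lemma q_block (N : V → ℕ) (hN : ∀ i, 1 ≤ N i) (φ : V → ℝ) (w1 w2 : List V) (a : V)
    (hnd : (w1 ++ a :: w2).Nodup) (s : ℕ) (hs : s ≤ N a) :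
    Qfun N (muInd φ) (fun i =>
      (((w1 ++ a :: w2).flatMap fun b => List.replicate (N b) b).take
        ((w1.map N).sum + s)).count i)
      = ((w1.map fun i => 1 - φ i).prod) * (1 - φ a * (s : ℝ) / (N a : ℝ)) := by
  have hnd1 : w1.Nodup := (List.nodup_append.1 hnd).1
  have ha : a ∉ w1 := by
    have := (List.nodup_append.1 hnd).2.2
    intro h; exact this a h a List.mem_cons_self rfl
  rw [take_block N w1 w2 a s hs, qfun_prod]
  have hcount : ∀ i : V,
      (((w1.flatMap fun b => List.replicate (N b) b) ++ List.replicate s a).count i)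
        = (if i ∈ w1 then N i else 0) + (if i = a then s else 0) := by
    intro i
    rw [List.count_append, count_flatMap N w1 hnd1 i, List.count_replicate]
    simp only [beq_iff_eq]
    rcases eq_or_ne i a with rfl | h
    · simp
    · simp [h, Ne.symm h]
  have key : ∀ i : V, (1 - φ i * (((((w1.flatMap fun b => List.replicate (N b) b) ++
      List.replicate s a).count i : ℕ) : ℝ) / (N i : ℝ)))
      = if i = a then 1 - φ a * (s : ℝ) / (N a : ℝ)
        else if i ∈ w1 then 1 - φ i else 1 := by
    intro i
    rw [hcount i]
    rcases eq_or_ne i a with rfl | hia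
    · simp [ha, mul_div_assoc]
    · rcases em (i ∈ w1) with hi | hi
      · have : (N i : ℝ) ≠ 0 := Nat.cast_ne_zero.mpr (Nat.one_le_iff_ne_zero.mp (hN i))
        simp [hia, hi, div_self this]
      · simp [hia, hi]
  calc ∏ i : V, (1 - φ i * (((((w1.flatMap fun b => List.replicate (N b) b) ++
          List.replicate s a).count i : ℕ) : ℝ) / (N i : ℝ)))
      = ∏ i : V, (if i = a then 1 - φ a * (s : ℝ) / (N a : ℝ)
          else if i ∈ w1 then 1 - φ i else 1) := Finset.prod_congr rfl fun i _ => key i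
    _ = ∏ i ∈ insert a w1.toFinset, (if i = a then 1 - φ a * (s : ℝ) / (N a : ℝ)
          else if i ∈ w1 then 1 - φ i else 1) := by
        refine (Finset.prod_subset (Finset.subset_univ _) fun i _ hi => ?_).symm
        simp only [Finset.mem_insert, List.mem_toFinset, not_or] at hi
        simp [hi.1, hi.2]
    _ = ((w1.map fun i => 1 - φ i).prod) * (1 - φ a * (s : ℝ) / (N a : ℝ)) := by
        rw [Finset.prod_insert (by simpa using ha)]
        rw [if_pos rfl, mul_comm]
        congr 1
        rw [← List.prod_toFinset _ hnd1]
        refine Finset.prod_congr rfl fun i hi => ?_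
        rw [List.mem_toFinset] at hi
        have hia : i ≠ a := fun h => ha (h ▸ hi)
        simp [hia, hi]

lemma gauss_sum (c : ℝ) (n : ℕ) (hn : 1 ≤ n) :
    ∑ s ∈ Finset.range n, (1 - c * ((s : ℝ) + 1) / (n : ℝ))
      = (n : ℝ) - ((n : ℝ) + 1) * c / 2 := by
  have h : ∀ m : ℕ, ∑ s ∈ Finset.range m, ((s : ℝ) + 1) = m * (m + 1) / 2 := by
    intro m
    induction m with
    | zero => simp
    | succ m ih => rw [Finset.sum_range_succ, ih]; push_cast; ring
  have hn0 : (n : ℝ) ≠ 0 := Nat.cast_ne_zero.mpr (Nat.one_le_iff_ne_zero.mp hn)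
  have : ∑ s ∈ Finset.range n, (1 - c * ((s : ℝ) + 1) / (n : ℝ))
      = (n : ℝ) - (c / n) * ∑ s ∈ Finset.range n, ((s : ℝ) + 1) := by
    rw [Finset.sum_sub_distrib, Finset.sum_const, Finset.card_range, Finset.mul_sum]
    simp only [nsmul_eq_mul, mul_one]
    congr 1
    exact Finset.sum_congr rfl fun s _ => by ring
  rw [this, h n]
  field_simp

noncomputable def blockCost (N : V → ℕ) (φ : V → ℝ) : List V → ℝ
  | [] => 0
  | a :: w => ((N a : ℝ) - ((N a : ℝ) + 1) * φ a / 2) + (1 - φ a) * blockCost N φ w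

lemma main_sum (N : V → ℕ) (hN : ∀ i, 1 ≤ N i) (φ : V → ℝ) :
    ∀ (w2 w1 : List V), (w1 ++ w2).Nodup →
    ∑ t ∈ Finset.range ((w2.map N).sum), Qfun N (muInd φ) (fun i =>
        (((w1 ++ w2).flatMap fun b => List.replicate (N b) b).take
          ((w1.map N).sum + (t + 1))).count i)
      = ((w1.map fun i => 1 - φ i).prod) * blockCost N φ w2
  | [], w1, hnd => by simp [blockCost]
  | a :: w2, w1, hnd => by
    rw [List.map_cons, List.sum_cons, Finset.sum_range_add]
    have h1 : ∑ t ∈ Finset.range (N a), Qfun N (muInd φ) (fun i =>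
        (((w1 ++ a :: w2).flatMap fun b => List.replicate (N b) b).take
          ((w1.map N).sum + (t + 1))).count i)
        = ((w1.map fun i => 1 - φ i).prod) * ((N a : ℝ) - ((N a : ℝ) + 1) * φ a / 2) := by
      have : ∀ t ∈ Finset.range (N a), Qfun N (muInd φ) (fun i =>
          (((w1 ++ a :: w2).flatMap fun b => List.replicate (N b) b).take
            ((w1.map N).sum + (t + 1))).count i)
          = ((w1.map fun i => 1 - φ i).prod) * (1 - φ a * ((t : ℝ) + 1) / (N a : ℝ)) := by
        intro t ht
        rw [q_block N hN φ w1 w2 a hnd (t + 1) (Finset.mem_range.1 ht)]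
        push_cast
        ring_nf
      rw [Finset.sum_congr rfl this, ← Finset.mul_sum, gauss_sum (φ a) (N a) (hN a)]
    have h2 : ∑ t ∈ Finset.range ((w2.map N).sum), Qfun N (muInd φ) (fun i =>
        (((w1 ++ a :: w2).flatMap fun b => List.replicate (N b) b).take
          ((w1.map N).sum + (N a + t + 1))).count i)
        = ((w1.map fun i => 1 - φ i).prod) * ((1 - φ a) * blockCost N φ w2) := by
      have hassoc : w1 ++ a :: w2 = (w1 ++ [a]) ++ w2 := by simp
      have hsum : ∀ t : ℕ, (w1.map N).sum + (N a + t + 1) = (((w1 ++ [a]).map N).sum + (t + 1)) := by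
        intro t; simp; ring
      have := main_sum N hN φ w2 (w1 ++ [a]) (by rw [← hassoc]; exact hnd)
      calc ∑ t ∈ Finset.range ((w2.map N).sum), Qfun N (muInd φ) (fun i =>
            (((w1 ++ a :: w2).flatMap fun b => List.replicate (N b) b).take
              ((w1.map N).sum + (N a + t + 1))).count i)
          = ∑ t ∈ Finset.range ((w2.map N).sum), Qfun N (muInd φ) (fun i =>
            ((((w1 ++ [a]) ++ w2).flatMap fun b => List.replicate (N b) b).take
              (((w1 ++ [a]).map N).sum + (t + 1))).count i) := by
            refine Finset.sum_congr rfl fun t _ => ?_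
            rw [← hassoc, ← hsum t]
        _ = (((w1 ++ [a]).map fun i => 1 - φ i).prod) * blockCost N φ w2 := this
        _ = ((w1.map fun i => 1 - φ i).prod) * ((1 - φ a) * blockCost N φ w2) := by
            simp [mul_assoc]
    rw [h1, h2, blockCost]
    ring

lemma take_ofFn_prod {M : Type*} [CommMonoid M] :
    ∀ (n : ℕ) (u : Fin n → V) (g : V → M) (t : ℕ),
    (((List.ofFn u).take t).map g).prod
      = ∏ j ∈ Finset.univ.filter (fun j : Fin n => j.val < t), g (u j)
  | 0, u, g, t => by simp
  | n + 1, u, g, 0 => by simp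
  | n + 1, u, g, t + 1 => by
    rw [List.ofFn_succ, List.take_succ_cons, List.map_cons, List.prod_cons,
      take_ofFn_prod n (fun i => u i.succ) g t]
    rw [Finset.prod_filter, Finset.prod_filter, Fin.prod_univ_succ]
    simp

lemma take_ofFn_sum {M : Type*} [AddCommMonoid M] :
    ∀ (n : ℕ) (u : Fin n → V) (g : V → M) (t : ℕ),
    (((List.ofFn u).take t).map g).sum
      = ∑ j ∈ Finset.univ.filter (fun j : Fin n => j.val < t), g (u j)
  | 0, u, g, t => by simp
  | n + 1, u, g, 0 => by simp
  | n + 1, u, g, t + 1 => by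
    rw [List.ofFn_succ, List.take_succ_cons, List.map_cons, List.sum_cons,
      take_ofFn_sum n (fun i => u i.succ) g t]
    rw [Finset.sum_filter, Finset.sum_filter, Fin.sum_univ_succ]
    simp

lemma blockCost_ofFn (N : V → ℕ) (φ : V → ℝ) :
    ∀ (n : ℕ) (u : Fin n → V),
    blockCost N φ (List.ofFn u)
      = ∑ k : Fin n, ((N (u k) : ℝ) - ((N (u k) : ℝ) + 1) * φ (u k) / 2) *
          ∏ j ∈ Finset.univ.filter (fun j : Fin n => j.val < k.val), (1 - φ (u j))
  | 0, u => by simp [blockCost]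
  | n + 1, u => by
    rw [List.ofFn_succ, blockCost, blockCost_ofFn N φ n (fun i => u i.succ)]
    rw [Fin.sum_univ_succ]
    have h0 : (Finset.univ.filter (fun j : Fin (n+1) => j.val < (0 : Fin (n+1)).val)) = ∅ := by
      simp
    rw [h0]
    simp only [Finset.prod_empty, mul_one]
    congr 1
    rw [Finset.mul_sum]
    refine Finset.sum_congr rfl fun k _ => ?_
    have : ∏ j ∈ Finset.univ.filter (fun j : Fin (n+1) => j.val < (k.succ).val), (1 - φ (u j))
        = (1 - φ (u 0)) * ∏ j ∈ Finset.univ.filter (fun j : Fin n => j.val < k.val),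
            (1 - φ (u j.succ)) := by
      rw [Finset.prod_filter, Finset.prod_filter, Fin.prod_univ_succ]
      simp
    rw [this]
    ring

/-- Corollary 4 of the paper: in the independent model, for the block policy
determined by an ordering `v` of the urns, the probability of reaching the
first stage of the `k`-th block without a red marble is `∏_{j<k} (1 - φ (v j))`,
and the expected cost has the stated closed form. -/
theorem independent_block_policy_cost (N : V → ℕ) (hN : ∀ i, 1 ≤ N i)
    (φ : V → ℝ) (hφ0 : ∀ i, 0 < φ i) (hφ1 : ∀ i, φ i ≤ 1)
    (v : Fin (Fintype.card V) → V) (hv : Function.Bijective v) :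
    (∀ k : Fin (Fintype.card V),
      Qfun N (muInd φ)
          (fun i => ((blockPolicy N v).take (∑ j ∈ Finset.Iio k, N (v j))).count i) =
        ∏ j ∈ Finset.Iio k, (1 - φ (v j))) ∧
    ECost N (muInd φ) (blockPolicy N v) =
      ∑ k : Fin (Fintype.card V),
        ((N (v k) : ℝ) - ((N (v k) : ℝ) + 1) * φ (v k) / 2) *
          ∏ j ∈ Finset.Iio k, (1 - φ (v j)) := by
  have hnd : (List.ofFn v).Nodup := List.nodup_ofFn.2 hv.injective
  have hIio : ∀ k : Fin (Fintype.card V),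
      Finset.Iio k = Finset.univ.filter (fun j : Fin (Fintype.card V) => j.val < k.val) := by
    intro k
    ext j
    rw [Finset.mem_Iio, Finset.mem_filter]
    exact ⟨fun h => ⟨Finset.mem_univ j, h⟩, fun h => h.2⟩
  constructor
  · intro k
    have hk : (k : ℕ) < (List.ofFn v).length := by simp
    have hdecomp := List.take_append_drop (k : ℕ) (List.ofFn v)
    rw [List.drop_eq_getElem_cons hk] at hdecomp
    have hget : (List.ofFn v)[(k : ℕ)] = v k := by
      rw [List.getElem_ofFn]
    rw [hget] at hdecomp
    have hsum : ∑ j ∈ Finset.Iio k, N (v j)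
        = (((List.ofFn v).take (k : ℕ)).map N).sum + 0 := by
      rw [hIio k, take_ofFn_sum (Fintype.card V) v N (k : ℕ), add_zero]
    have hq := q_block N hN φ ((List.ofFn v).take (k : ℕ)) ((List.ofFn v).drop ((k : ℕ) + 1))
      (v k) (by rw [hdecomp]; exact hnd) 0 (Nat.zero_le _)
    simp only [show blockPolicy N v
        = (((List.ofFn v).take (k : ℕ)) ++ (v k) :: ((List.ofFn v).drop ((k : ℕ) + 1))).flatMap
            (fun b => List.replicate (N b) b) by rw [hdecomp]; rfl, hsum]
    rw [hq, take_ofFn_prod (Fintype.card V) v (fun i => 1 - φ i) (k : ℕ), hIio k]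
    simp
  · have hlen : (blockPolicy N v).length = ((List.ofFn v).map N).sum := by
      rw [blockPolicy, List.length_flatMap]
      simp [Function.comp_def]
    have hmain := main_sum N hN φ (List.ofFn v) [] (by simpa using hnd)
    simp only [List.nil_append, List.map_nil, List.sum_nil, zero_add] at hmain
    rw [ECost, hlen]
    rw [show (blockPolicy N v) = (List.ofFn v).flatMap (fun b => List.replicate (N b) b)
      from rfl]
    rw [hmain, List.prod_nil, one_mul, blockCost_ofFn]
    exact Finset.sum_congr rfl fun k _ => by rw [hIio k]
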